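/- Let s : ℝ → ℝ³ be continuously differentiable with sup_t |s'(t)| =: v_max < c. Then for every x ∈ ℝ³ and t ∈ ℝ, the function F(τ) = τ + c⁻¹|x − s(τ)| is strictly increasing (whenever x ≠ s(τ), with F Lipschitz and increasing in general), satisfies F(τ) → ±∞ as τ → ±∞, and hence the retarded time equation F(τ) = t has exactly one solution τ = τ(x,t). -/

import Mathlib

open Filter

/-- Existence and uniqueness of the retarded time for a globally subluminal trajectory. -/
theorem stmt_11 (c : ℝ) (hc : 0 < c) (s : ℝ → EuclideanSpace ℝ (Fin 3))
    (hs : ContDiff ℝ 1 s) (vmax : ℝ) (hvmax : vmax < c)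
    (hv : ∀ t : ℝ, ‖deriv s t‖ ≤ vmax)
    (x : EuclideanSpace ℝ (Fin 3)) (t : ℝ) :
    StrictMono (fun τ : ℝ => τ + c⁻¹ * ‖x - s τ‖) ∧
    Tendsto (fun τ : ℝ => τ + c⁻¹ * ‖x - s τ‖) atTop atTop ∧
    Tendsto (fun τ : ℝ => τ + c⁻¹ * ‖x - s τ‖) atBot atBot ∧
    ∃! τ : ℝ, τ + c⁻¹ * ‖x - s τ‖ = t := by
  set F : ℝ → ℝ := fun τ : ℝ => τ + c⁻¹ * ‖x - s τ‖ with hF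
  have hdiff : ∀ y : ℝ, DifferentiableAt ℝ s y := fun y =>
    (hs.differentiable one_ne_zero).differentiableAt
  have hlip : ∀ a b : ℝ, ‖s b - s a‖ ≤ vmax * ‖b - a‖ := fun a b =>
    Convex.norm_image_sub_le_of_norm_deriv_le (fun y _ => hdiff y)
      (fun y _ => hv y) convex_univ (Set.mem_univ a) (Set.mem_univ b)
  have hk : 0 < 1 - c⁻¹ * vmax := by
    have : c⁻¹ * vmax < c⁻¹ * c := by
      exact mul_lt_mul_of_pos_left hvmax (inv_pos.mpr hc)
    rw [inv_mul_cancel₀ hc.ne'] at this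
    linarith
  -- key growth inequality
  have key : ∀ a b : ℝ, a ≤ b → F a + (1 - c⁻¹ * vmax) * (b - a) ≤ F b := by
    intro a b hab
    have h1 : ‖x - s a‖ - ‖x - s b‖ ≤ ‖s b - s a‖ := by
      have := norm_sub_norm_le (x - s a) (x - s b)
      have h2 : (x - s a) - (x - s b) = s b - s a := by abel
      rwa [h2] at this
    have h3 : ‖s b - s a‖ ≤ vmax * (b - a) := by
      have := hlip a b
      rwa [Real.norm_eq_abs, abs_of_nonneg (by linarith)] at this
    have h4 : ‖x - s a‖ - ‖x - s b‖ ≤ vmax * (b - a) := h1.trans h3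
    have hc' : 0 ≤ c⁻¹ := (inv_pos.mpr hc).le
    have h5 : c⁻¹ * (‖x - s a‖ - ‖x - s b‖) ≤ c⁻¹ * (vmax * (b - a)) :=
      mul_le_mul_of_nonneg_left h4 hc'
    simp only [hF]
    nlinarith [h5]
  have hmono : StrictMono F := by
    intro a b hab
    have h1 := key a b hab.le
    have h2 : 0 < (1 - c⁻¹ * vmax) * (b - a) := mul_pos hk (by linarith)
    exact lt_of_lt_of_le (lt_add_of_pos_right _ h2) h1
  have hcont : Continuous F := by
    exact (continuous_id.add (continuous_const.mul ((continuous_const.sub hs.continuous).norm)))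
  have htop : Tendsto F atTop atTop := by
    apply tendsto_atTop_mono' _ (_ : ∀ᶠ τ in atTop, F 0 + (1 - c⁻¹ * vmax) * τ ≤ F τ)
    · exact (tendsto_atTop_add_const_left _ _
        ((tendsto_const_mul_atTop_of_pos hk).mpr tendsto_id))
    · filter_upwards [eventually_ge_atTop (0 : ℝ)] with τ hτ
      simpa using key 0 τ hτ
  have hbot : Tendsto F atBot atBot := by
    apply tendsto_atBot_mono' _ (_ : ∀ᶠ τ in atBot, F τ ≤ F 0 + (1 - c⁻¹ * vmax) * τ)
    · exact (tendsto_atBot_add_const_left _ _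
        ((tendsto_const_mul_atBot_of_pos hk).mpr tendsto_id))
    · filter_upwards [eventually_le_atBot (0 : ℝ)] with τ hτ
      have := key τ 0 hτ
      nlinarith
  refine ⟨hmono, htop, hbot, ?_⟩
  obtain ⟨τ, hτ⟩ := hcont.surjective htop hbot t
  exact ⟨τ, hτ, fun y hy => hmono.injective (hy.trans hτ.symm)⟩
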